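/- From transductive LOO bounds to generalization in expectation: Let 𝒜 be a transductive algorithm which, given a finite multiset of labeled examples and the multiset of all n covariates, outputs a prediction at each covariate; assume 𝒜 depends on its inputs only through these multisets, and that all maps below are measurable. Suppose there exist constants C > 1 and Comp ≥ 0 such that for every m ≥ 1 and every deterministic sequence S = ((x_1,y_1),…,(x_m,y_m)), (1/m) Σ_{i=1}^m ℓ(𝒜(S∖{(x_i,y_i)}; {x_1,…,x_m})(x_i), y_i) ≤ C·(1/m)·min_{h∈ℋ} Σ_{i=1}^m ℓ(h(x_i), y_i) + Comp/m. Let (X_1,Y_1),…,(X_n,Y_n),(X,Y) be i.i.d. with distribution 𝒟, and define h̃(X) = 𝒜(((X_1,Y_1),…,(X_n,Y_n)); {X_1,…,X_n,X})(X). Then E[ℓ(h̃(X), Y)] ≤ C·min_{h∈ℋ} E[ℓ(h(X), Y)] + Comp/(n+1). -/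

import Mathlib

open MeasureTheory
open scoped ENNReal

/-- The `i`-th transductive leave-one-out loss term. -/
def looTerm {𝒳 𝒴 𝒴' : Type*} [DecidableEq (𝒳 × 𝒴)] (ℓ : 𝒴' → 𝒴 → ℝ)
    (𝒜 : Multiset (𝒳 × 𝒴) → Multiset 𝒳 → 𝒳 → 𝒴') (m : ℕ) (i : Fin m)
    (ω : Fin m → 𝒳 × 𝒴) : ℝ :=
  ℓ (𝒜 ((Multiset.ofList (List.ofFn ω)).erase (ω i))
      (Multiset.ofList (List.ofFn fun j => (ω j).1)) (ω i).1) (ω i).2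

lemma aux_first_n {β : Type*} [DecidableEq β] (m : ℕ) (g : Fin (m+1) → β) :
    (Multiset.ofList (List.ofFn fun k : Fin m => g k.castSucc))
      = (Multiset.ofList (List.ofFn g)).erase (g (Fin.last m)) := by
  rw [List.ofFn_succ']
  have : (Multiset.ofList ((List.ofFn fun k : Fin m => g k.castSucc).concat (g (Fin.last m))))
      = g (Fin.last m) ::ₘ Multiset.ofList (List.ofFn fun k : Fin m => g k.castSucc) := by
    simp [List.concat_eq_append, Multiset.singleton_add, add_comm]
  rw [this, Multiset.erase_cons_head]

lemma aux_perm {β : Type*} (m : ℕ) (g : Fin m → β) (e : Equiv.Perm (Fin m)) :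
    (Multiset.ofList (List.ofFn (fun j => g (e j)))) = Multiset.ofList (List.ofFn g) := by
  have h1 : List.ofFn (fun j => g (e j)) = (List.finRange m).map (g ∘ e) := by
    simp [List.ofFn_eq_map]
  have h2 : List.ofFn g = (List.finRange m).map g := by simp [List.ofFn_eq_map]
  rw [h1, h2]
  have h3 : (Multiset.ofList ((List.finRange m).map (g ∘ e)))
      = Multiset.map g (Multiset.map (⇑e) (List.finRange m)) := by
    simp [Multiset.map_map]
  have h5 : (Multiset.ofList ((List.finRange m).map g))
      = Multiset.map g (List.finRange m) := by simp
  rw [h3, h5]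
  congr 1
  have h4 : (↑(List.finRange m) : Multiset (Fin m)) = (Finset.univ : Finset (Fin m)).val := by
    simp [Fin.univ_def]
  rw [h4]
  simpa using congrArg Finset.val (Finset.map_univ_equiv e)

lemma aux_map_eval {ι : Type*} [Fintype ι] [DecidableEq ι] {α : Type*} [MeasurableSpace α]
    (μ : Measure α) [IsProbabilityMeasure μ] (i : ι) :
    (Measure.pi fun _ : ι => μ).map (Function.eval i) = μ := by
  ext s hs
  rw [Measure.map_apply (measurable_pi_apply i) hs, Set.eval_preimage, Measure.pi_pi]
  rw [Finset.prod_eq_single i (fun j _ hj => by rw [Function.update_of_ne hj]; exact measure_univ)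
    (by simp)]
  simp

lemma aux_swap_apply {ι : Type*} {β : Type*} [MeasurableSpace β] (e : Equiv.Perm ι)
    (ω : ι → β) :
    (MeasurableEquiv.piCongrLeft (fun _ : ι => β) e) ω = fun b => ω (e.symm b) := by
  funext b
  rw [MeasurableEquiv.coe_piCongrLeft]
  have := Equiv.piCongrLeft_apply_apply (fun _ : ι => β) e ω (e.symm b)
  simpa using this

/-- **From transductive LOO bounds to generalization in expectation.**
`𝒜` takes a multiset of labeled examples and the multiset of all covariates and outputs a
prediction at each covariate (so it depends on its inputs only through these multisets).
If for every `m ≥ 1` and every deterministic sequence `S` of `m` labeled points the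
transductive LOO error of `𝒜` is at most `C·(ERM loss)/m + Comp/m`, then for an i.i.d.
sample of size `n+1` from `𝒟` (the first `n` points used for training, the last as the
test point), the expected loss of the resulting predictor is at most
`C·min_{h∈ℋ} E[ℓ(h(X),Y)] + Comp/(n+1)`.  Expectations of the nonnegative loss are
expressed as lower Lebesgue integrals. -/
theorem transductive_loo_to_generalization
    {𝒳 𝒴 𝒴' H : Type*} [MeasurableSpace 𝒳] [MeasurableSpace 𝒴]
    [DecidableEq (𝒳 × 𝒴)]
    (eval : H → 𝒳 → 𝒴') (ℓ : 𝒴' → 𝒴 → ℝ)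
    (hℓ : ∀ (a : 𝒴') (b : 𝒴), 0 ≤ ℓ a b)
    (𝒜 : Multiset (𝒳 × 𝒴) → Multiset 𝒳 → 𝒳 → 𝒴')
    (C Comp : ℝ) (hC : 1 < C) (hComp : 0 ≤ Comp)
    -- empirical minimizers exist (e.g. ℋ finite)
    (hERM : ∀ (m : ℕ) (S : Fin m → 𝒳 × 𝒴), ∃ gS : H,
      ∀ h : H, ∑ i, ℓ (eval gS (S i).1) (S i).2 ≤ ∑ i, ℓ (eval h (S i).1) (S i).2)
    -- transductive LOO oracle inequality for every deterministic sequence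
    (hLOO : ∀ (m : ℕ), 1 ≤ m → ∀ (S : Fin m → 𝒳 × 𝒴) (gS : H),
      (∀ h : H, ∑ i, ℓ (eval gS (S i).1) (S i).2 ≤ ∑ i, ℓ (eval h (S i).1) (S i).2) →
      (1 / (m : ℝ)) * ∑ i, ℓ
          (𝒜 ((Multiset.ofList (List.ofFn S)).erase (S i))
            (Multiset.ofList (List.ofFn fun j : Fin m => (S j).1)) (S i).1) (S i).2
        ≤ C * ((1 / (m : ℝ)) * ∑ i, ℓ (eval gS (S i).1) (S i).2) + Comp / (m : ℝ))
    (n : ℕ)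
    (𝒟 : Measure (𝒳 × 𝒴)) [IsProbabilityMeasure 𝒟]
    -- a minimizer of the population risk over ℋ
    (gpop : H)
    (hgpop : ∀ h : H,
      (∫⁻ z : 𝒳 × 𝒴, ENNReal.ofReal (ℓ (eval gpop z.1) z.2) ∂𝒟)
        ≤ ∫⁻ z : 𝒳 × 𝒴, ENNReal.ofReal (ℓ (eval h z.1) z.2) ∂𝒟)
    -- measurability of the relevant maps
    (hmeasA : Measurable fun ω : Fin (n + 1) → 𝒳 × 𝒴 =>
      ℓ (𝒜 (Multiset.ofList (List.ofFn fun i : Fin n => ω i.castSucc))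
          (Multiset.ofList (List.ofFn fun j : Fin (n + 1) => (ω j).1))
          (ω (Fin.last n)).1)
        (ω (Fin.last n)).2)
    (hmeash : ∀ h : H, Measurable fun z : 𝒳 × 𝒴 => ℓ (eval h z.1) z.2) :
    (∫⁻ ω : Fin (n + 1) → 𝒳 × 𝒴, ENNReal.ofReal
        (ℓ (𝒜 (Multiset.ofList (List.ofFn fun i : Fin n => ω i.castSucc))
              (Multiset.ofList (List.ofFn fun j : Fin (n + 1) => (ω j).1))
              (ω (Fin.last n)).1)
           (ω (Fin.last n)).2)
        ∂(Measure.pi fun _ : Fin (n + 1) => 𝒟))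
      ≤ ENNReal.ofReal C * (∫⁻ z : 𝒳 × 𝒴, ENNReal.ofReal (ℓ (eval gpop z.1) z.2) ∂𝒟)
          + ENNReal.ofReal (Comp / (n + 1 : ℝ)) := by
  classical
  set π : Measure (Fin (n+1) → 𝒳 × 𝒴) := Measure.pi fun _ => 𝒟 with hπ
  set R : ℝ≥0∞ := ∫⁻ z : 𝒳 × 𝒴, ENNReal.ofReal (ℓ (eval gpop z.1) z.2) ∂𝒟 with hR
  have hnpos : (0:ℝ) < (n:ℝ) + 1 := by positivity
  set c : ℝ≥0∞ := ENNReal.ofReal (1/((n:ℝ)+1)) with hc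
  -- the integrand is the last LOO term
  have hFeq : (fun ω : Fin (n + 1) → 𝒳 × 𝒴 =>
      ℓ (𝒜 (Multiset.ofList (List.ofFn fun i : Fin n => ω i.castSucc))
          (Multiset.ofList (List.ofFn fun j : Fin (n + 1) => (ω j).1))
          (ω (Fin.last n)).1) (ω (Fin.last n)).2)
      = looTerm ℓ 𝒜 (n+1) (Fin.last n) := by
    funext ω
    simp only [looTerm]
    rw [aux_first_n n ω]
  have hmeasLast : Measurable (looTerm ℓ 𝒜 (n+1) (Fin.last n)) := hFeq ▸ hmeasA
  -- permutation equivariance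
  have key : ∀ (i : Fin (n+1)) (ω : Fin (n+1) → 𝒳 × 𝒴),
      looTerm ℓ 𝒜 (n+1) (Fin.last n)
        ((MeasurableEquiv.piCongrLeft (fun _ : Fin (n+1) => 𝒳 × 𝒴)
          (Equiv.swap i (Fin.last n))) ω) = looTerm ℓ 𝒜 (n+1) i ω := by
    intro i ω
    rw [aux_swap_apply]
    simp only [looTerm, Equiv.symm_swap, Equiv.swap_apply_right]
    rw [aux_perm (n+1) ω (Equiv.swap i (Fin.last n)),
      aux_perm (n+1) (fun j => (ω j).1) (Equiv.swap i (Fin.last n))]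
  have hmeasT : ∀ i : Fin (n+1),
      Measurable fun ω => ENNReal.ofReal (looTerm ℓ 𝒜 (n+1) i ω) := by
    intro i
    have : (fun ω => ENNReal.ofReal (looTerm ℓ 𝒜 (n+1) i ω))
        = (fun ω => ENNReal.ofReal (looTerm ℓ 𝒜 (n+1) (Fin.last n) ω)) ∘
          (MeasurableEquiv.piCongrLeft (fun _ : Fin (n+1) => 𝒳 × 𝒴)
            (Equiv.swap i (Fin.last n))) := by
      funext ω; simp [Function.comp, key i ω]
    rw [this]
    exact (ENNReal.measurable_ofReal.comp hmeasLast).comp (MeasurableEquiv.measurable _)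
  -- exchangeability
  have intEq : ∀ i : Fin (n+1),
      ∫⁻ ω, ENNReal.ofReal (looTerm ℓ 𝒜 (n+1) i ω) ∂π
        = ∫⁻ ω, ENNReal.ofReal (looTerm ℓ 𝒜 (n+1) (Fin.last n) ω) ∂π := by
    intro i
    have h := (measurePreserving_piCongrLeft (fun _ : Fin (n+1) => 𝒟)
      (Equiv.swap i (Fin.last n))).lintegral_comp
      (ENNReal.measurable_ofReal.comp hmeasLast)
    calc ∫⁻ ω, ENNReal.ofReal (looTerm ℓ 𝒜 (n+1) i ω) ∂π
        = ∫⁻ ω, ENNReal.ofReal (looTerm ℓ 𝒜 (n+1) (Fin.last n)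
            ((MeasurableEquiv.piCongrLeft (fun _ : Fin (n+1) => 𝒳 × 𝒴)
              (Equiv.swap i (Fin.last n))) ω)) ∂π :=
          lintegral_congr fun ω => by rw [key i ω]
      _ = _ := h
  -- arithmetic on c
  have hcm : c * ((n+1 : ℕ) : ℝ≥0∞) = 1 := by
    rw [hc, show (((n+1 : ℕ)) : ℝ≥0∞) = ENNReal.ofReal ((n:ℝ)+1) by
        rw [← ENNReal.ofReal_natCast]; push_cast; ring_nf,
      ← ENNReal.ofReal_mul (by positivity)]
    rw [one_div, inv_mul_cancel₀ (ne_of_gt hnpos)]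
    simp
  -- pointwise oracle inequality
  have hA : ∀ ω : Fin (n+1) → 𝒳 × 𝒴,
      (1/((n:ℝ)+1)) * ∑ i, looTerm ℓ 𝒜 (n+1) i ω
        ≤ C * ((1/((n:ℝ)+1)) * ∑ i, ℓ (eval gpop (ω i).1) (ω i).2) + Comp/((n:ℝ)+1) := by
    intro ω
    obtain ⟨gS, hgS⟩ := hERM (n+1) ω
    have h := hLOO (n+1) (by omega) ω gS hgS
    push_cast at h
    simp only [looTerm]
    refine h.trans (add_le_add_left ?_ _)
    refine mul_le_mul_of_nonneg_left ?_ (le_of_lt (lt_trans one_pos hC))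
    exact mul_le_mul_of_nonneg_left (hgS gpop) (by positivity)
  -- per-coordinate population risk
  have hcoord : ∀ i : Fin (n+1),
      ∫⁻ ω, ENNReal.ofReal (ℓ (eval gpop (ω i).1) (ω i).2) ∂π = R := by
    intro i
    rw [hR, ← aux_map_eval (ι := Fin (n+1)) 𝒟 i,
      lintegral_map (Measurable.ennreal_ofReal (hmeash gpop)) (measurable_pi_apply i)]
  -- main chain
  have goal_eq : (∫⁻ ω : Fin (n + 1) → 𝒳 × 𝒴, ENNReal.ofReal
        (ℓ (𝒜 (Multiset.ofList (List.ofFn fun i : Fin n => ω i.castSucc))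
              (Multiset.ofList (List.ofFn fun j : Fin (n + 1) => (ω j).1))
              (ω (Fin.last n)).1)
           (ω (Fin.last n)).2) ∂π)
      = ∫⁻ ω, ENNReal.ofReal (looTerm ℓ 𝒜 (n+1) (Fin.last n) ω) ∂π :=
    lintegral_congr fun ω => by simp only [looTerm]; rw [aux_first_n n ω]
  rw [goal_eq]
  have step1 : ∫⁻ ω, ENNReal.ofReal (looTerm ℓ 𝒜 (n+1) (Fin.last n) ω) ∂π
      = c * ∑ i : Fin (n+1), ∫⁻ ω, ENNReal.ofReal (looTerm ℓ 𝒜 (n+1) i ω) ∂π := by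
    rw [Finset.sum_congr rfl (fun i _ => intEq i), Finset.sum_const, Finset.card_univ,
      Fintype.card_fin, nsmul_eq_mul, ← mul_assoc, hcm, one_mul]
  rw [step1, ← lintegral_finset_sum _ (fun i _ => hmeasT i),
    ← lintegral_const_mul c (by exact Finset.measurable_sum _ (fun i _ => hmeasT i))]
  have step2 : ∫⁻ ω, c * ∑ i : Fin (n+1), ENNReal.ofReal (looTerm ℓ 𝒜 (n+1) i ω) ∂π
      ≤ ∫⁻ ω, ENNReal.ofReal (C * ((1/((n:ℝ)+1)) * ∑ i : Fin (n+1),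
          ℓ (eval gpop (ω i).1) (ω i).2) + Comp/((n:ℝ)+1)) ∂π := by
    refine lintegral_mono fun ω => ?_
    have : c * ∑ i : Fin (n+1), ENNReal.ofReal (looTerm ℓ 𝒜 (n+1) i ω)
        = ENNReal.ofReal ((1/((n:ℝ)+1)) * ∑ i, looTerm ℓ 𝒜 (n+1) i ω) := by
      have hnn : ∀ i ∈ (Finset.univ : Finset (Fin (n+1))), 0 ≤ looTerm ℓ 𝒜 (n+1) i ω :=
        fun i _ => hℓ _ _
      rw [ENNReal.ofReal_mul (by positivity), ENNReal.ofReal_sum_of_nonneg hnn]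
    rw [this]
    exact ENNReal.ofReal_le_ofReal (hA ω)
  refine step2.trans ?_
  have havg_nonneg : ∀ ω : Fin (n+1) → 𝒳 × 𝒴,
      0 ≤ C * ((1/((n:ℝ)+1)) * ∑ i : Fin (n+1), ℓ (eval gpop (ω i).1) (ω i).2) := by
    intro ω
    have : (0:ℝ) ≤ ∑ i : Fin (n+1), ℓ (eval gpop (ω i).1) (ω i).2 :=
      Finset.sum_nonneg fun i _ => hℓ _ _
    have hCpos : (0:ℝ) ≤ C := le_of_lt (lt_trans one_pos hC)
    positivity
  have split : ∫⁻ ω, ENNReal.ofReal (C * ((1/((n:ℝ)+1)) * ∑ i : Fin (n+1),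
        ℓ (eval gpop (ω i).1) (ω i).2) + Comp/((n:ℝ)+1)) ∂π
      = (∫⁻ ω, ENNReal.ofReal (C * ((1/((n:ℝ)+1)) * ∑ i : Fin (n+1),
          ℓ (eval gpop (ω i).1) (ω i).2)) ∂π) + ENNReal.ofReal (Comp/((n:ℝ)+1)) := by
    calc ∫⁻ ω, ENNReal.ofReal (C * ((1/((n:ℝ)+1)) * ∑ i : Fin (n+1),
          ℓ (eval gpop (ω i).1) (ω i).2) + Comp/((n:ℝ)+1)) ∂π
        = ∫⁻ ω, (ENNReal.ofReal (C * ((1/((n:ℝ)+1)) * ∑ i : Fin (n+1),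
            ℓ (eval gpop (ω i).1) (ω i).2)) + ENNReal.ofReal (Comp/((n:ℝ)+1))) ∂π :=
          lintegral_congr fun ω => ENNReal.ofReal_add (havg_nonneg ω) (by positivity)
      _ = (∫⁻ ω, ENNReal.ofReal (C * ((1/((n:ℝ)+1)) * ∑ i : Fin (n+1),
            ℓ (eval gpop (ω i).1) (ω i).2)) ∂π) + ∫⁻ _, ENNReal.ofReal (Comp/((n:ℝ)+1)) ∂π :=
          lintegral_add_right _ measurable_const
      _ = _ := by simp
  have hmeasg : ∀ i : Fin (n+1), Measurable fun ω : Fin (n+1) → 𝒳 × 𝒴 =>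
      ENNReal.ofReal (ℓ (eval gpop (ω i).1) (ω i).2) :=
    fun i => ((hmeash gpop).comp (measurable_pi_apply i)).ennreal_ofReal
  have main2 : ∫⁻ ω, ENNReal.ofReal (C * ((1/((n:ℝ)+1)) * ∑ i : Fin (n+1),
        ℓ (eval gpop (ω i).1) (ω i).2)) ∂π = ENNReal.ofReal C * R := by
    calc ∫⁻ ω, ENNReal.ofReal (C * ((1/((n:ℝ)+1)) * ∑ i : Fin (n+1),
          ℓ (eval gpop (ω i).1) (ω i).2)) ∂π
        = ∫⁻ ω, ENNReal.ofReal C * (c * ∑ i : Fin (n+1),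
            ENNReal.ofReal (ℓ (eval gpop (ω i).1) (ω i).2)) ∂π := by
          refine lintegral_congr fun ω => ?_
          rw [ENNReal.ofReal_mul (le_of_lt (lt_trans one_pos hC)),
            ENNReal.ofReal_mul (by positivity),
            ENNReal.ofReal_sum_of_nonneg (fun i _ => hℓ _ _)]
      _ = ENNReal.ofReal C * (c * ∑ i : Fin (n+1),
            ∫⁻ ω, ENNReal.ofReal (ℓ (eval gpop (ω i).1) (ω i).2) ∂π) := by
          rw [lintegral_const_mul (ENNReal.ofReal C)
              ((Finset.measurable_sum _ fun i _ => hmeasg i).const_mul c),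
            lintegral_const_mul c (Finset.measurable_sum _ fun i _ => hmeasg i),
            lintegral_finset_sum _ fun i _ => hmeasg i]
      _ = ENNReal.ofReal C * (c * (((n+1 : ℕ) : ℝ≥0∞) * R)) := by
          rw [Finset.sum_congr rfl fun i _ => hcoord i, Finset.sum_const, Finset.card_univ,
            Fintype.card_fin, nsmul_eq_mul]
      _ = ENNReal.ofReal C * R := by rw [← mul_assoc c, hcm, one_mul]
  exact le_of_eq (by rw [split, main2])
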